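/- Let u : ℝ × ℝ → ℝ (arguments (x, t)) have continuous partial derivatives ∂ₜu, ∂ₓu, ∂ₓ²u, ∂ₓ³u, and let λ ∈ ℝ. Define the 2×2 real matrix fields U = [[λ, u], [−u, −λ]] and V = [[−4λ³ − 2u²λ, −4uλ² − 2(∂ₓu)λ − 2u³ − ∂ₓ²u], [4uλ² − 2(∂ₓu)λ + 2u³ + ∂ₓ²u, 4λ³ + 2u²λ]]. Then the zero-curvature condition ∂ₜU − ∂ₓV + U·V − V·U = 0 (as 2×2 matrices, at every point (x, t)) holds if and only if u satisfies the modified Korteweg–de Vries equation ∂ₜu + 6·u²·∂ₓu + ∂ₓ³u = 0 everywhere. -/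

import Mathlib

/-- For the mKdV Lax connection `U = [[λ, u], [−u, −λ]]`,
`V = [[−4λ³ − 2u²λ, −4uλ² − 2u_xλ − 2u³ − u_xx], [4uλ² − 2u_xλ + 2u³ + u_xx, 4λ³ + 2u²λ]]`,
the zero-curvature condition `∂ₜU − ∂ₓV + U·V − V·U = 0` holds iff `u` satisfies the
modified KdV equation `∂ₜu + 6·u²·∂ₓu + ∂ₓ³u = 0`. -/
theorem stmt_3 (u : ℝ → ℝ → ℝ) (lam : ℝ)
    (hux : ∀ t : ℝ, ContDiff ℝ 3 (fun x => u x t))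
    (hut : ∀ x : ℝ, Differentiable ℝ (fun t => u x t))
    (hcont_t : Continuous fun p : ℝ × ℝ => deriv (fun s => u p.1 s) p.2)
    (hcont_x : ∀ k : ℕ, k ≤ 3 →
      Continuous fun p : ℝ × ℝ => iteratedDeriv k (fun y => u y p.2) p.1)
    (U V : ℝ → ℝ → Matrix (Fin 2) (Fin 2) ℝ)
    (hU : ∀ x t : ℝ, U x t = !![lam, u x t; -u x t, -lam])
    (hV : ∀ x t : ℝ, V x t =
      !![-4 * lam ^ 3 - 2 * (u x t) ^ 2 * lam,
          -4 * u x t * lam ^ 2 - 2 * deriv (fun y => u y t) x * lam - 2 * (u x t) ^ 3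
            - iteratedDeriv 2 (fun y => u y t) x;
         4 * u x t * lam ^ 2 - 2 * deriv (fun y => u y t) x * lam + 2 * (u x t) ^ 3
            + iteratedDeriv 2 (fun y => u y t) x,
          4 * lam ^ 3 + 2 * (u x t) ^ 2 * lam]) :
    (∀ (x t : ℝ) (i j : Fin 2),
        deriv (fun s => U x s i j) t - deriv (fun y => V y t i j) x
          + (U x t * V x t - V x t * U x t) i j = 0)
      ↔ (∀ x t : ℝ,
          deriv (fun s => u x s) t + 6 * (u x t) ^ 2 * deriv (fun y => u y t) x
            + iteratedDeriv 3 (fun y => u y t) x = 0) := by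
  have key : ∀ (x t : ℝ) (i j : Fin 2),
      deriv (fun s => U x s i j) t - deriv (fun y => V y t i j) x
        + (U x t * V x t - V x t * U x t) i j
      = (if i = 0 ∧ j = 1 then (1:ℝ) else if i = 1 ∧ j = 0 then -1 else 0) *
        (deriv (fun s => u x s) t + 6 * (u x t) ^ 2 * deriv (fun y => u y t) x
          + iteratedDeriv 3 (fun y => u y t) x) := by
    intro x t i j
    -- x-derivative facts for f := fun y => u y t
    have hf3 : ContDiff ℝ ((2:ℕ) + 1) (fun y => u y t) := by exact_mod_cast hux t
    have hf2 : ContDiff ℝ ((1:ℕ) + 1) (deriv (fun y => u y t)) := by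
      exact_mod_cast (contDiff_succ_iff_deriv.mp hf3).2.2
    have hf1 : ContDiff ℝ 1 (deriv (deriv (fun y => u y t))) :=
      (contDiff_succ_iff_deriv.mp hf2).2.2
    have i2 : iteratedDeriv 2 (fun y => u y t) = deriv (deriv (fun y => u y t)) := by
      rw [iteratedDeriv_succ, iteratedDeriv_one]
    have i3 : iteratedDeriv 3 (fun y => u y t) = deriv (iteratedDeriv 2 (fun y => u y t)) :=
      iteratedDeriv_succ
    have H0 : HasDerivAt (fun y => u y t) (deriv (fun y => u y t) x) x :=
      ((hf3.differentiable (by norm_num)) x).hasDerivAt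
    have H1 : HasDerivAt (deriv (fun y => u y t)) (iteratedDeriv 2 (fun y => u y t) x) x := by
      rw [i2]; exact ((hf2.differentiable (by norm_num)) x).hasDerivAt
    have H2 : HasDerivAt (iteratedDeriv 2 (fun y => u y t))
        (iteratedDeriv 3 (fun y => u y t) x) x := by
      rw [i3, i2]; exact ((hf1.differentiable (by norm_num)) x).hasDerivAt
    -- t-derivative fact
    have Ht : HasDerivAt (fun s => u x s) (deriv (fun s => u x s) t) t :=
      ((hut x) t).hasDerivAt
    -- derivatives of the four V-entries in x
    have hv00 : deriv (fun y => (-4 * lam ^ 3 - 2 * (u y t) ^ 2 * lam : ℝ)) x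
        = -(4 * u x t * deriv (fun y => u y t) x * lam) := by
      have h : HasDerivAt (fun y => (-4 * lam ^ 3 - 2 * (u y t) ^ 2 * lam : ℝ))
          (-(4 * u x t * deriv (fun y => u y t) x * lam)) x := by
        have := (hasDerivAt_const x (-4 * lam ^ 3 : ℝ)).sub
          (((H0.pow 2).const_mul (2:ℝ)).mul_const lam)
        exact this.congr_deriv (by ring)
      exact h.deriv
    have hv01 : deriv (fun y => (-4 * u y t * lam ^ 2 - 2 * deriv (fun z => u z t) y * lam
          - 2 * (u y t) ^ 3 - iteratedDeriv 2 (fun z => u z t) y : ℝ)) x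
        = -4 * deriv (fun y => u y t) x * lam ^ 2 - 2 * iteratedDeriv 2 (fun y => u y t) x * lam
          - 6 * (u x t) ^ 2 * deriv (fun y => u y t) x - iteratedDeriv 3 (fun y => u y t) x := by
      have h : HasDerivAt (fun y => (-4 * u y t * lam ^ 2 - 2 * deriv (fun z => u z t) y * lam
            - 2 * (u y t) ^ 3 - iteratedDeriv 2 (fun z => u z t) y : ℝ))
          (-4 * deriv (fun y => u y t) x * lam ^ 2
            - 2 * iteratedDeriv 2 (fun y => u y t) x * lam
            - 6 * (u x t) ^ 2 * deriv (fun y => u y t) x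
            - iteratedDeriv 3 (fun y => u y t) x) x := by
        have := ((((H0.const_mul (-4:ℝ)).mul_const (lam ^ 2)).sub
          ((H1.const_mul (2:ℝ)).mul_const lam)).sub
          ((H0.pow 3).const_mul (2:ℝ))).sub H2
        exact this.congr_deriv (by ring)
      exact h.deriv
    have hv10 : deriv (fun y => (4 * u y t * lam ^ 2 - 2 * deriv (fun z => u z t) y * lam
          + 2 * (u y t) ^ 3 + iteratedDeriv 2 (fun z => u z t) y : ℝ)) x
        = 4 * deriv (fun y => u y t) x * lam ^ 2 - 2 * iteratedDeriv 2 (fun y => u y t) x * lam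
          + 6 * (u x t) ^ 2 * deriv (fun y => u y t) x + iteratedDeriv 3 (fun y => u y t) x := by
      have h : HasDerivAt (fun y => (4 * u y t * lam ^ 2 - 2 * deriv (fun z => u z t) y * lam
            + 2 * (u y t) ^ 3 + iteratedDeriv 2 (fun z => u z t) y : ℝ))
          (4 * deriv (fun y => u y t) x * lam ^ 2
            - 2 * iteratedDeriv 2 (fun y => u y t) x * lam
            + 6 * (u x t) ^ 2 * deriv (fun y => u y t) x
            + iteratedDeriv 3 (fun y => u y t) x) x := by
        have := ((((H0.const_mul (4:ℝ)).mul_const (lam ^ 2)).sub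
          ((H1.const_mul (2:ℝ)).mul_const lam)).add
          ((H0.pow 3).const_mul (2:ℝ))).add H2
        exact this.congr_deriv (by ring)
      exact h.deriv
    have hv11 : deriv (fun y => (4 * lam ^ 3 + 2 * (u y t) ^ 2 * lam : ℝ)) x
        = 4 * u x t * deriv (fun y => u y t) x * lam := by
      have h : HasDerivAt (fun y => (4 * lam ^ 3 + 2 * (u y t) ^ 2 * lam : ℝ))
          (4 * u x t * deriv (fun y => u y t) x * lam) x := by
        have := (hasDerivAt_const x (4 * lam ^ 3 : ℝ)).add
          (((H0.pow 2).const_mul (2:ℝ)).mul_const lam)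
        exact this.congr_deriv (by ring)
      exact h.deriv
    -- t-derivatives of the U-entries
    have hu01 : deriv (fun s => u x s) t = deriv (fun s => u x s) t := rfl
    fin_cases i <;> fin_cases j <;>
      simp only [hU, hV, Matrix.mul_apply, Fin.sum_univ_two, Matrix.cons_val',
        Matrix.cons_val_zero, Matrix.cons_val_one, Matrix.head_cons, Matrix.head_fin_const,
        Matrix.empty_val', Matrix.cons_val_fin_one, Matrix.sub_apply, Fin.isValue, Fin.mk_zero, Fin.mk_one, Matrix.of_apply]
    · rw [deriv_const, hv00]; norm_num; ring
    · rw [hv01, Ht.deriv]; norm_num; ring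
    · rw [hv10, show deriv (fun s => -u x s) t = -deriv (fun s => u x s) t from Ht.neg.deriv]; norm_num; ring
    · rw [deriv_const, hv11]; norm_num; ring
  constructor
  · intro h x t
    have h1 := h x t 0 1
    rw [key x t 0 1] at h1
    norm_num at h1
    exact h1
  · intro h x t i j
    rw [key x t i j, h x t]
    ring
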